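/- Let R be a commutative ring and A a commutative R-algebra. If dim_e^A(R) = 0, then dim(A) = f-dim_R(A). -/

import Mathlib

open TensorProduct

noncomputable section

/-- The residue field `κ(p)` of a commutative ring `R` at a prime ideal `p`, realised as the
residue field of the localization of `R` at `p`; it is an `R`-algebra. -/
abbrev Kappa (R : Type*) [CommRing R] (p : Ideal R) [p.IsPrime] : Type _ :=
  IsLocalRing.ResidueField (Localization.AtPrime p)

/-- The fibre ring `κ(p) ⊗_R A` of an `R`-algebra `A` at a prime ideal `p` of `R`. -/
abbrev FiberRing (R A : Type*) [CommRing R] [CommRing A] [Algebra R A]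
    (p : Ideal R) [p.IsPrime] : Type _ :=
  (Kappa R p) ⊗[R] A

/-- A prime `p` of `R` is *effective* with respect to the `R`-algebra `A` if the fibre ring
`κ(p) ⊗_R A` is nonzero. -/
def IsEffective (R A : Type*) [CommRing R] [CommRing A] [Algebra R A]
    (p : PrimeSpectrum R) : Prop :=
  Nontrivial (FiberRing R A p.asIdeal)

/-- `dim_p(A) := dim (κ(p) ⊗_R A)`, the Krull dimension of the fibre ring of `A` at `p`. -/
def fiberDim (R A : Type*) [CommRing R] [CommRing A] [Algebra R A]
    (p : Ideal R) [p.IsPrime] : WithBot ℕ∞ :=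
  ringKrullDim (FiberRing R A p)

/-- `f-dim_R(A) := sup {dim_p(A) : p ∈ Spec_e^A(R)}`, the fibre Krull dimension of `A` over `R`. -/
def fdim (R A : Type*) [CommRing R] [CommRing A] [Algebra R A] : WithBot ℕ∞ :=
  ⨆ p : {p : PrimeSpectrum R // IsEffective R A p}, fiberDim R A p.1.asIdeal

/-- `dim_e^A(R)`, the effective Krull dimension of `R` with respect to `A`: the supremum of
lengths of chains of primes of `R` consisting of effective primes with respect to `A`. -/
def edim (R A : Type*) [CommRing R] [CommRing A] [Algebra R A] : WithBot ℕ∞ :=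
  Order.krullDim {p : PrimeSpectrum R // IsEffective R A p}

/-- A ring homomorphism `f : R → A` satisfies the Going-Down property if for any primes
`p ⊆ q` of `R` and any prime `Q` of `A` with `f⁻¹(Q) = q` there is a prime `P ⊆ Q` of `A`
with `f⁻¹(P) = p`. -/
def SatisfiesGoingDown {R A : Type*} [CommRing R] [CommRing A] (f : R →+* A) : Prop :=
  ∀ p q : Ideal R, p.IsPrime → q.IsPrime → p ≤ q →
    ∀ Q : Ideal A, Q.IsPrime → Q.comap f = q →
      ∃ P : Ideal A, P.IsPrime ∧ P ≤ Q ∧ P.comap f = p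

/-- The transcendence degree (as an extended natural number) of an algebra `L` over `K`:
the supremum of the cardinalities of finite algebraically independent subsets of `L`. -/
def algTrdeg (K L : Type*) [CommRing K] [CommRing L] [Algebra K L] : ℕ∞ :=
  ⨆ s : {s : Finset L // AlgebraicIndependent K (Subtype.val : {x : L // x ∈ s} → L)},
    (s.1.card : ℕ∞)

/-- Transcendence degree along a ring homomorphism. -/
def rhTrdeg {K L : Type*} [CommRing K] [CommRing L] (f : K →+* L) : ℕ∞ :=
  @algTrdeg K L _ _ f.toAlgebra

/-- `t.d.(C : k)`: the supremum, over the primes `q` of `C`, of the transcendence degree of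
`Frac(C/q)` over `k`. -/
def tdRing (k C : Type*) [CommRing k] [CommRing C] [Algebra k C] : ℕ∞ :=
  ⨆ q : PrimeSpectrum C, algTrdeg k (FractionRing (C ⧸ q.asIdeal))

/-- `t.d._p(C : R) := t.d.(κ(p) ⊗_R C : κ(p))`, the transcendence degree of `C` over `R`
at the prime `p`. -/
def tdLocal (R C : Type*) [CommRing R] [CommRing C] [Algebra R C]
    (p : Ideal R) [p.IsPrime] : ℕ∞ :=
  tdRing (Kappa R p) (FiberRing R C p)

/-- `Spec_p(A)`: the primes of `A` contracting to `p` over `R`. -/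
abbrev SpecAt (R A : Type*) [CommRing R] [CommRing A] [Algebra R A] (p : Ideal R) : Type _ :=
  {P : PrimeSpectrum A // P.asIdeal.comap (algebraMap R A) = p}

/-- `ht_p(P)`: the supremum of lengths of chains of primes of `A` contracting to `p`
and ending at `P`. -/
def htLocal (R : Type*) {A : Type*} [CommRing R] [CommRing A] [Algebra R A] {p : Ideal R}
    (P : SpecAt R A p) : ℕ∞ :=
  Order.height P

/-- A `k`-algebra `C` over a field `k` is an AF-ring if
`ht(Q) + t.d.(C/Q : k) = t.d.(C_Q : k)` for every prime `Q` of `C`. -/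
def IsAFRing (k C : Type*) [Field k] [CommRing C] [Algebra k C] : Prop :=
  ∀ Q : PrimeSpectrum C,
    Order.height Q + tdRing k (C ⧸ Q.asIdeal) = tdRing k (Localization.AtPrime Q.asIdeal)

/-- `A` is a fibred AF-ring at a prime `p` of `R`: the fibre ring `κ(p) ⊗_R A` is nonzero
and is an AF-ring over `κ(p)`. -/
def IsFibredAFRingAt (R A : Type*) [CommRing R] [CommRing A] [Algebra R A]
    (p : PrimeSpectrum R) : Prop :=
  Nontrivial (FiberRing R A p.asIdeal) ∧
    IsAFRing (Kappa R p.asIdeal) (FiberRing R A p.asIdeal)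

/-- `A` is a fibred AF-ring over `R`: every nonzero fibre ring `κ(p) ⊗_R A` is an AF-ring
over `κ(p)`. -/
def IsFibredAFRing (R A : Type*) [CommRing R] [CommRing A] [Algebra R A] : Prop :=
  ∀ p : PrimeSpectrum R, Nontrivial (FiberRing R A p.asIdeal) →
    IsAFRing (Kappa R p.asIdeal) (FiberRing R A p.asIdeal)

/-- The extension `Q[n] = Q·C[X₁,…,Xₙ]` of a prime `Q` of `C` to the polynomial ring
in `n` indeterminates; it is again prime. -/
def polyExt {C : Type*} [CommRing C] (n : ℕ) (Q : PrimeSpectrum C) :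
    PrimeSpectrum (MvPolynomial (Fin n) C) :=
  ⟨Q.asIdeal.map MvPolynomial.C, by
    have h : RingHom.ker (MvPolynomial.map (σ := Fin n) (Ideal.Quotient.mk Q.asIdeal)) =
        Q.asIdeal.map MvPolynomial.C := by
      rw [MvPolynomial.ker_map, Ideal.mk_ker]
    rw [← h]
    exact RingHom.ker_isPrime _⟩

/-- `ht(Q[s])` for `s : ℕ∞`: for finite `s = n` it is the height of `Q[n]`, and for
`s = ⊤` it is the supremum over all finite `n` of the heights of the `Q[n]`. -/
def polyExtHeight {C : Type*} [CommRing C] (Q : PrimeSpectrum C) (s : ℕ∞) : ℕ∞ :=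
  WithTop.recTopCoe (⨆ n : ℕ, Order.height (polyExt n Q))
    (fun n => Order.height (polyExt n Q)) s

/-- Wadsworth's invariant
`D(s, d, C) := sup {ht(Q[s]) + min(s, d + t.d.(C/Q : k)) : Q ∈ Spec C}`. -/
def Dinv (k C : Type*) [Field k] [CommRing C] [Algebra k C] (s d : ℕ∞) : ℕ∞ :=
  ⨆ Q : PrimeSpectrum C, polyExtHeight Q s + min s (d + tdRing k (C ⧸ Q.asIdeal))

/-- `D_p(s, d, B) := D(s, d, κ(p) ⊗_R B)`. -/
def DLocal (R B : Type*) [CommRing R] [CommRing B] [Algebra R B]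
    (p : Ideal R) [p.IsPrime] (s d : ℕ∞) : ℕ∞ :=
  Dinv (Kappa R p) (FiberRing R B p) s d



section StmtTwoAux

variable {R A : Type*} [CommRing R] [CommRing A] [Algebra R A]

lemma My.nontrivial_of_isPrime {B : Type*} [CommRing B] (Q : Ideal B) (hQ : Q.IsPrime) :
    Nontrivial B := by
  by_contra hcon
  rw [not_nontrivial_iff_subsingleton] at hcon
  exact hQ.ne_top ((Ideal.eq_top_iff_one Q).mpr (by rw [Subsingleton.elim (1 : B) 0]; exact Q.zero_mem))

lemma My.algebraMap_kappa_eq (p : Ideal R) [p.IsPrime] :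
    algebraMap R (Kappa R p) =
      (IsLocalRing.residue (Localization.AtPrime p)).comp
        (algebraMap R (Localization.AtPrime p)) := by
  rw [IsScalarTower.algebraMap_eq R (Localization.AtPrime p) (Kappa R p)]
  rfl

lemma My.ker_algebraMap_kappa (p : Ideal R) [p.IsPrime] :
    RingHom.ker (algebraMap R (Kappa R p)) = p := by
  rw [My.algebraMap_kappa_eq, ← RingHom.comap_ker, IsLocalRing.ker_residue]
  exact Localization.AtPrime.under_maximalIdeal

lemma My.sos_kappa (p : Ideal R) [p.IsPrime] :
    (algebraMap R (Kappa R p)).SurjectiveOnStalks := by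
  rw [My.algebraMap_kappa_eq]
  exact (RingHom.surjectiveOnStalks_of_surjective Ideal.Quotient.mk_surjective).comp
    (RingHom.surjectiveOnStalks_of_isLocalization (M := p.primeCompl) _)

lemma My.comap_fiber (p : Ideal R) [p.IsPrime] (Q : Ideal (FiberRing R A p)) [Q.IsPrime] :
    (Q.comap (Algebra.TensorProduct.includeRight (R := R) (A := Kappa R p)
      (B := A)).toRingHom).comap (algebraMap R A) = p := by
  rw [Ideal.comap_comap, ← Algebra.TensorProduct.includeLeftRingHom_comp_algebraMap,
    ← Ideal.comap_comap]
  haveI : (Q.comap (Algebra.TensorProduct.includeLeftRingHom :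
      Kappa R p →+* FiberRing R A p)).IsPrime := Ideal.IsPrime.comap _
  rw [Ideal.eq_bot_of_prime (Q.comap (Algebra.TensorProduct.includeLeftRingHom :
      Kappa R p →+* FiberRing R A p))]
  exact My.ker_algebraMap_kappa p

lemma My.tensor_le_aux {R S T : Type*} [CommRing R] [CommRing S] [Algebra R S]
    [CommRing T] [Algebra R T]
    (hRT : (algebraMap R T).SurjectiveOnStalks)
    (p₁ p₂ : Ideal (S ⊗[R] T)) [p₁.IsPrime] [p₂.IsPrime]
    (h1 : p₁.comap (algebraMap S (S ⊗[R] T)) ≤ p₂.comap (algebraMap S (S ⊗[R] T)))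
    (h2 : p₁.comap (Algebra.TensorProduct.includeRight (R := R) (A := S) (B := T)).toRingHom ≤
          p₂.comap (Algebra.TensorProduct.includeRight (R := R) (A := S) (B := T)).toRingHom) :
    p₁ ≤ p₂ := by
  let g : T →+* S ⊗[R] T := Algebra.TensorProduct.includeRight.toRingHom
  intro x hxp₁
  by_contra hxp₂
  obtain ⟨t, r, a, ht, e⟩ := hRT.exists_mul_eq_tmul x (p₂.comap g) inferInstance
  have h₁ : a ⊗ₜ[R] t ∈ p₁ := e ▸ p₁.mul_mem_left ((1 : S) ⊗ₜ[R] (r • t)) hxp₁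
  have h₂ : a ⊗ₜ[R] t ∉ p₂ := e ▸ p₂.primeCompl.mul_mem ht hxp₂
  rw [← mul_one a, ← one_mul t, ← Algebra.TensorProduct.tmul_mul_tmul] at h₁ h₂
  have h₃ : t ∉ p₂.comap g := fun hh ↦ h₂ (Ideal.mul_mem_left _ _ hh)
  have h₄ : a ∉ p₂.comap (algebraMap S (S ⊗[R] T)) := fun hh ↦ h₂ (Ideal.mul_mem_right _ _ hh)
  exact p₁.primeCompl.mul_mem (fun hh ↦ h₄ (h1 hh)) (fun hh ↦ h₃ (h2 hh)) h₁

lemma My.fiber_le_of_comap_le (p : Ideal R) [p.IsPrime]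
    (Q₁ Q₂ : Ideal (FiberRing R A p)) [Q₁.IsPrime] [Q₂.IsPrime]
    (hle : Q₁.comap (Algebra.TensorProduct.includeRight (R := R) (A := Kappa R p)
        (B := A)).toRingHom ≤
      Q₂.comap (Algebra.TensorProduct.includeRight (R := R) (A := Kappa R p)
        (B := A)).toRingHom) :
    Q₁ ≤ Q₂ := by
  let e : (A ⊗[R] Kappa R p) ≃ₐ[R] FiberRing R A p := Algebra.TensorProduct.comm R A (Kappa R p)
  let Q₁' := Q₁.comap e.toAlgHom.toRingHom
  let Q₂' := Q₂.comap e.toAlgHom.toRingHom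
  haveI : Q₁'.IsPrime := Ideal.IsPrime.comap _
  haveI : Q₂'.IsPrime := Ideal.IsPrime.comap _
  have hcommL : e.toAlgHom.toRingHom.comp (algebraMap A (A ⊗[R] Kappa R p)) =
      (Algebra.TensorProduct.includeRight (R := R) (A := Kappa R p) (B := A)).toRingHom := by
    ext a
    simp [e, Algebra.TensorProduct.algebraMap_apply]
  have hc1 : Q₁'.comap (algebraMap A (A ⊗[R] Kappa R p)) =
      Q₁.comap (Algebra.TensorProduct.includeRight (R := R) (A := Kappa R p)
        (B := A)).toRingHom := by
    show (Q₁.comap e.toAlgHom.toRingHom).comap (algebraMap A (A ⊗[R] Kappa R p)) = _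
    rw [Ideal.comap_comap, hcommL]
  have hc2 : Q₂'.comap (algebraMap A (A ⊗[R] Kappa R p)) =
      Q₂.comap (Algebra.TensorProduct.includeRight (R := R) (A := Kappa R p)
        (B := A)).toRingHom := by
    show (Q₂.comap e.toAlgHom.toRingHom).comap (algebraMap A (A ⊗[R] Kappa R p)) = _
    rw [Ideal.comap_comap, hcommL]
  have hkey : Q₁' ≤ Q₂' := by
    apply My.tensor_le_aux (My.sos_kappa p)
    · rw [hc1, hc2]
      exact hle
    · haveI : (Q₁'.comap (Algebra.TensorProduct.includeRight (R := R) (A := A)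
          (B := Kappa R p)).toRingHom).IsPrime := Ideal.IsPrime.comap _
      haveI : (Q₂'.comap (Algebra.TensorProduct.includeRight (R := R) (A := A)
          (B := Kappa R p)).toRingHom).IsPrime := Ideal.IsPrime.comap _
      rw [Ideal.eq_bot_of_prime (Q₁'.comap (Algebra.TensorProduct.includeRight (R := R) (A := A)
          (B := Kappa R p)).toRingHom)]
      exact bot_le
  exact (Ideal.comap_le_comap_iff_of_surjective e.toAlgHom.toRingHom e.surjective Q₁ Q₂).mp hkey

lemma My.exists_fiber_prime (p : Ideal R) [p.IsPrime] (P : Ideal A) [P.IsPrime]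
    (hP : P.comap (algebraMap R A) = p) :
    ∃ Q : Ideal (FiberRing R A p), Q.IsPrime ∧
      Q.comap (Algebra.TensorProduct.includeRight (R := R) (A := Kappa R p)
        (B := A)).toRingHom = P := by
  let L := Localization.AtPrime P
  let k := IsLocalRing.ResidueField L
  let ψA : A →+* k := (IsLocalRing.residue L).comp (algebraMap A L)
  letI : Algebra R k := (ψA.comp (algebraMap R A)).toAlgebra
  haveI : IsScalarTower R R k := IsScalarTower.of_algebraMap_eq (fun _ => rfl)
  let loc : Localization.AtPrime p →+* L :=
    Localization.localRingHom p P (algebraMap R A) hP.symm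
  haveI := Localization.isLocalHom_localRingHom p P (algebraMap R A) hP.symm
  let f₁ : Kappa R p →ₐ[R] k :=
    { toRingHom := IsLocalRing.ResidueField.map loc
      commutes' := fun r => by
        have hr : algebraMap R (Kappa R p) r =
            IsLocalRing.residue _ (algebraMap R (Localization.AtPrime p) r) := by
          rw [IsScalarTower.algebraMap_apply R (Localization.AtPrime p) (Kappa R p)]
          rfl
        show IsLocalRing.ResidueField.map loc (algebraMap R (Kappa R p) r) = algebraMap R k r
        rw [hr, IsLocalRing.ResidueField.map_residue, Localization.localRingHom_to_map]
        rfl }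
  let f₂ : A →ₐ[R] k := { toRingHom := ψA, commutes' := fun r => rfl }
  let ψ := Algebra.TensorProduct.lift f₁ f₂ (fun x y => Commute.all _ _)
  refine ⟨RingHom.ker ψ.toRingHom, RingHom.ker_isPrime _, ?_⟩
  have hcomp := Algebra.TensorProduct.lift_comp_includeRight f₁ f₂ (fun x y => Commute.all _ _)
  have hcomp' : ψ.toRingHom.comp (Algebra.TensorProduct.includeRight (R := R) (A := Kappa R p)
      (B := A)).toRingHom = ψA := by
    ext a
    exact DFunLike.congr_fun hcomp a
  rw [RingHom.comap_ker, hcomp']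
  show RingHom.ker ((IsLocalRing.residue L).comp (algebraMap A L)) = P
  rw [← RingHom.comap_ker, IsLocalRing.ker_residue]
  exact Localization.AtPrime.under_maximalIdeal

end StmtTwoAux

/-- If `dim_e^A(R) = 0` then `dim A = f-dim_R(A)`. -/
theorem stmt_2 (R A : Type*) [CommRing R] [CommRing A] [Algebra R A]
    (h : edim R A = 0) :
    ringKrullDim A = fdim R A := by
  classical
  have hanti : ∀ q q' : {p : PrimeSpectrum R // IsEffective R A p}, q ≤ q' → q = q' := by
    intro q q' hle
    by_contra hne
    have hlt : q < q' := lt_of_le_of_ne hle hne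
    have h1 : ¬ IsMin q' := fun hm => hlt.not_ge (hm hle)
    have h2 : Order.height q' ≠ 0 := fun h0 => h1 (Order.height_eq_zero.mp h0)
    have h3 : (1 : ℕ∞) ≤ Order.height q' := ENat.one_le_iff_ne_zero.mpr h2
    have h4 := Order.height_le_krullDim q'
    rw [show Order.krullDim {p : PrimeSpectrum R // IsEffective R A p} = edim R A from rfl,
      h] at h4
    have h6 : Order.height q' ≤ 0 := by exact_mod_cast h4
    exact h2 (le_antisymm h6 zero_le)
  have heff : ∀ P : PrimeSpectrum A,
      IsEffective R A (PrimeSpectrum.comap (algebraMap R A) P) := by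
    intro P
    obtain ⟨Q, hQ, -⟩ := My.exists_fiber_prime
      ((PrimeSpectrum.comap (algebraMap R A) P).asIdeal) P.asIdeal
      (PrimeSpectrum.comap_asIdeal (algebraMap R A) P).symm
    exact My.nontrivial_of_isPrime Q hQ
  refine le_antisymm ?_ ?_
  · -- dim A ≤ fdim
    show (⨆ l : LTSeries (PrimeSpectrum A), (l.length : WithBot ℕ∞)) ≤ fdim R A
    refine iSup_le fun l => ?_
    set p : PrimeSpectrum R := PrimeSpectrum.comap (algebraMap R A) l.head with hp
    have hsame : ∀ i, PrimeSpectrum.comap (algebraMap R A) (l i) = p := by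
      intro i
      have h1 : p ≤ PrimeSpectrum.comap (algebraMap R A) (l i) :=
        Ideal.comap_mono (l.monotone (Fin.zero_le i))
      have h2 := hanti ⟨p, heff _⟩ ⟨_, heff (l i)⟩ h1
      exact (congrArg Subtype.val h2).symm
    have hchoice : ∀ i, ∃ Q : Ideal (FiberRing R A p.asIdeal), Q.IsPrime ∧
        Q.comap (Algebra.TensorProduct.includeRight (R := R) (A := Kappa R p.asIdeal)
          (B := A)).toRingHom = (l i).asIdeal := by
      intro i
      refine My.exists_fiber_prime p.asIdeal (l i).asIdeal ?_
      have := congrArg PrimeSpectrum.asIdeal (hsame i)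
      rwa [PrimeSpectrum.comap_asIdeal] at this
    choose Q hQp hQc using hchoice
    haveI : ∀ i, (Q i).IsPrime := hQp
    have hstep : ∀ i : Fin l.length,
        (⟨Q i.castSucc, hQp i.castSucc⟩ : PrimeSpectrum (FiberRing R A p.asIdeal)) <
          ⟨Q i.succ, hQp i.succ⟩ := by
      intro i
      have hll : l i.castSucc < l i.succ := l.step i
      have hlle : (Q i.castSucc) ≤ (Q i.succ) := by
        refine My.fiber_le_of_comap_le p.asIdeal _ _ ?_
        rw [hQc, hQc]
        exact hll.le
      refine lt_of_le_of_ne hlle ?_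
      intro heq
      apply hll.ne
      apply PrimeSpectrum.ext
      rw [← hQc i.castSucc, ← hQc i.succ]
      exact congrArg (Ideal.comap _) (congrArg PrimeSpectrum.asIdeal heq)
    let l' : LTSeries (PrimeSpectrum (FiberRing R A p.asIdeal)) :=
      ⟨l.length, fun i => ⟨Q i, hQp i⟩, hstep⟩
    calc ((l.length : ℕ∞) : WithBot ℕ∞) = (l'.length : ℕ∞) := rfl
      _ ≤ Order.krullDim (PrimeSpectrum (FiberRing R A p.asIdeal)) := Order.LTSeries.length_le_krullDim l'
      _ = fiberDim R A p.asIdeal := rfl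
      _ ≤ fdim R A := le_iSup
          (fun s : {p : PrimeSpectrum R // IsEffective R A p} => fiberDim R A s.1.asIdeal)
          ⟨p, heff l.head⟩
  · -- fdim ≤ dim A
    refine iSup_le fun s => ?_
    obtain ⟨p, hp⟩ := s
    show Order.krullDim (PrimeSpectrum (FiberRing R A p.asIdeal)) ≤
      Order.krullDim (PrimeSpectrum A)
    refine Order.krullDim_le_of_strictMono
      (fun Q => PrimeSpectrum.comap (Algebra.TensorProduct.includeRight (R := R)
        (A := Kappa R p.asIdeal) (B := A)).toRingHom Q) ?_
    intro Q₁ Q₂ hlt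
    refine lt_of_le_of_ne (Ideal.comap_mono hlt.le : _) ?_
    intro heq
    have heq' := congrArg PrimeSpectrum.asIdeal heq
    rw [PrimeSpectrum.comap_asIdeal, PrimeSpectrum.comap_asIdeal] at heq'
    have : Q₂.asIdeal ≤ Q₁.asIdeal :=
      My.fiber_le_of_comap_le p.asIdeal _ _ heq'.symm.le
    exact hlt.not_ge this
end
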